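/- arXiv:2303.05226 — 6 statements merged into one kernel-verified Lean document; each statement's English description precedes it below -/
import Mathlib

section
/- Let Λ be a finite-dimensional algebra and M a Λ-module. The full subcategory of K^{[-1,0]}(proj Λ) consisting of M-semistable complexes is closed under extensions: if X ↣ Y ↠ Z is a conflation (i.e., part of a triangle in the derived category with all three objects 2-term complexes of projectives) and X and Z are M-semistable, then Y is M-semistable. -/
/-- M-semistable complexes are closed under extensions.
A conflation `X ↣ Y ↠ Z` in `K^{[-1,0]}(proj Λ)` is represented (see Remark 2.2 of the paper,
after absorbing a contractible summand `P = P` into `Y`) by a degreewise short exact sequence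
of 2-term complexes of finitely generated projective `Λ`-modules.  If `X` and `Z` are
`M`-semistable (precomposition with the differential is an isomorphism
`Hom(−⁰, M) ≅ Hom(−⁻¹, M)`), then so is `Y`. -/
theorem stmt2 {k Λ : Type*} [Field k] [Ring Λ] [Algebra k Λ] [FiniteDimensional k Λ]
    {M : Type*} [AddCommGroup M] [Module Λ M] [Module.Finite Λ M]
    {Xm X0 Ym Y0 Zm Z0 : Type*}
    [AddCommGroup Xm] [Module Λ Xm] [Module.Finite Λ Xm] [Module.Projective Λ Xm]
    [AddCommGroup X0] [Module Λ X0] [Module.Finite Λ X0] [Module.Projective Λ X0]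
    [AddCommGroup Ym] [Module Λ Ym] [Module.Finite Λ Ym] [Module.Projective Λ Ym]
    [AddCommGroup Y0] [Module Λ Y0] [Module.Finite Λ Y0] [Module.Projective Λ Y0]
    [AddCommGroup Zm] [Module Λ Zm] [Module.Finite Λ Zm] [Module.Projective Λ Zm]
    [AddCommGroup Z0] [Module Λ Z0] [Module.Finite Λ Z0] [Module.Projective Λ Z0]
    (dx : Xm →ₗ[Λ] X0) (dy : Ym →ₗ[Λ] Y0) (dz : Zm →ₗ[Λ] Z0)
    -- the conflation `X ↣ Y ↠ Z`
    (fm : Xm →ₗ[Λ] Ym) (f0 : X0 →ₗ[Λ] Y0) (gm : Ym →ₗ[Λ] Zm) (g0 : Y0 →ₗ[Λ] Z0)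
    (hf : f0.comp dx = dy.comp fm) (hg : g0.comp dy = dz.comp gm)
    (hmono_m : Function.Injective fm) (hexact_m : Function.Exact fm gm)
    (hepi_m : Function.Surjective gm)
    (hmono_0 : Function.Injective f0) (hexact_0 : Function.Exact f0 g0)
    (hepi_0 : Function.Surjective g0)
    -- `X` and `Z` are `M`-semistable
    (hX : Function.Bijective fun φ : X0 →ₗ[Λ] M => φ.comp dx)
    (hZ : Function.Bijective fun φ : Z0 →ₗ[Λ] M => φ.comp dz) :
    -- then `Y` is `M`-semistable
    Function.Bijective fun φ : Y0 →ₗ[Λ] M => φ.comp dy := by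

  -- sections of the surjections, via projectivity of Zm and Z0
  obtain ⟨sm, hsm⟩ := Module.projective_lifting_property gm LinearMap.id hepi_m
  obtain ⟨s0, hs0⟩ := Module.projective_lifting_property g0 LinearMap.id hepi_0
  have hsm' : ∀ z, gm (sm z) = z := fun z => LinearMap.congr_fun hsm z
  have hs0' : ∀ z, g0 (s0 z) = z := fun z => LinearMap.congr_fun hs0 z
  have hgf0 : ∀ x, g0 (f0 x) = 0 := fun x => (hexact_0 (f0 x)).mpr ⟨x, rfl⟩
  -- retraction r0 of f0
  have hmem : ∀ y : Y0, y - s0 (g0 y) ∈ LinearMap.range f0 := by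
    intro y
    have h : g0 (y - s0 (g0 y)) = 0 := by simp [hs0']
    obtain ⟨x, hx⟩ := (hexact_0 _).mp h
    exact ⟨x, hx⟩
  set e := LinearEquiv.ofInjective f0 hmono_0 with he
  set r0 : Y0 →ₗ[Λ] X0 :=
    e.symm.toLinearMap.comp ((LinearMap.id - s0.comp g0).codRestrict (LinearMap.range f0)
      (fun y => by simpa using hmem y)) with hr0def
  have hr0 : ∀ x, r0 (f0 x) = x := by
    intro x
    have h1 : f0 x - s0 (g0 (f0 x)) = f0 x := by rw [hgf0, map_zero, sub_zero]
    have h2 : ((LinearMap.id - s0.comp g0).codRestrict (LinearMap.range f0)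
        (fun y => by simpa using hmem y)) (f0 x) = e x := by
      apply Subtype.ext
      simp [h1, he, LinearEquiv.ofInjective_apply]
    simp only [hr0def, LinearMap.comp_apply, h2, LinearEquiv.coe_coe,
      LinearEquiv.symm_apply_apply]
  constructor
  · -- injectivity
    intro φ1 φ2 h
    have h' : (φ1 - φ2).comp dy = 0 := by
      have h0 : φ1.comp dy = φ2.comp dy := h
      rw [LinearMap.sub_comp, h0, sub_self]
    set φ := φ1 - φ2 with hφ
    have h1 : (φ.comp f0).comp dx = 0 := by
      rw [LinearMap.comp_assoc, hf, ← LinearMap.comp_assoc, h', LinearMap.zero_comp]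
    have h2 : φ.comp f0 = 0 := by
      apply hX.1
      show (φ.comp f0).comp dx = (0 : X0 →ₗ[Λ] M).comp dx
      rw [h1, LinearMap.zero_comp]
    have hker : ∀ y, g0 y = 0 → φ y = 0 := by
      intro y hy
      obtain ⟨x, hx⟩ := (hexact_0 y).mp hy
      rw [← hx]
      exact LinearMap.congr_fun h2 x
    set ψ := φ.comp s0 with hψ
    have hψg : ψ.comp g0 = φ := by
      ext y
      have hz : g0 (s0 (g0 y) - y) = 0 := by simp [hs0']
      have := hker _ hz
      rw [map_sub, sub_eq_zero] at this
      simpa [hψ] using this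
    have hψdz : ψ.comp dz = 0 := by
      have hcomp : (ψ.comp dz).comp gm = 0 := by
        rw [LinearMap.comp_assoc, ← hg, ← LinearMap.comp_assoc, hψg, h']
      ext z
      obtain ⟨y, rfl⟩ := hepi_m z
      exact LinearMap.congr_fun hcomp y
    have hψ0 : ψ = 0 := by
      apply hZ.1
      show ψ.comp dz = (0 : Z0 →ₗ[Λ] M).comp dz
      rw [hψdz, LinearMap.zero_comp]
    have : φ = 0 := by rw [← hψg, hψ0, LinearMap.zero_comp]
    exact sub_eq_zero.mp this
  · -- surjectivity
    intro ψ
    obtain ⟨α, hα⟩ := hX.2 (ψ.comp fm)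
    have hα' : α.comp dx = ψ.comp fm := hα
    set a : Y0 →ₗ[Λ] M := α.comp r0 with ha
    have haf : a.comp f0 = α := by
      ext x
      simp [ha, hr0 x]
    set ψ' := ψ - a.comp dy with hψ'
    have hψ'f : ψ'.comp fm = 0 := by
      rw [hψ', LinearMap.sub_comp, LinearMap.comp_assoc, ← hf, ← LinearMap.comp_assoc,
        haf, hα', sub_self]
    have hkerm : ∀ y, gm y = 0 → ψ' y = 0 := by
      intro y hy
      obtain ⟨x, hx⟩ := (hexact_m y).mp hy
      rw [← hx]
      exact LinearMap.congr_fun hψ'f x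
    set γ := ψ'.comp sm with hγdef
    have hγ : γ.comp gm = ψ' := by
      ext y
      have hz : gm (sm (gm y) - y) = 0 := by simp [hsm']
      have := hkerm _ hz
      rw [map_sub, sub_eq_zero] at this
      simpa [hγdef] using this
    obtain ⟨δ, hδ⟩ := hZ.2 γ
    have hδ' : δ.comp dz = γ := hδ
    refine ⟨a + δ.comp g0, ?_⟩
    show (a + δ.comp g0).comp dy = ψ
    have key : (δ ∘ₗ g0) ∘ₗ dy = ψ' := by
      rw [LinearMap.comp_assoc, hg, ← LinearMap.comp_assoc, hδ', hγ]
    rw [LinearMap.add_comp, key, hψ']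
    abel
end

section
/- Let Λ be a finite-dimensional algebra and M a Λ-module. If X ↣ Y ↠ Z is a conflation in K^{[-1,0]}(proj Λ) with X and Y both M-semistable, then Z is M-semistable (closure under cones). Dually, if Y and Z are M-semistable then X is M-semistable (closure under cocones). -/
section aux
variable {R A B C M : Type*} [Ring R]
  [AddCommGroup A] [Module R A] [AddCommGroup B] [Module R B]
  [AddCommGroup C] [Module R C] [AddCommGroup M] [Module R M]

/-- Factoring through the cokernel: if `η` kills the image of `f`, it factors through `g`. -/
lemma aux_factor (f : A →ₗ[R] B) (g : B →ₗ[R] C)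
    (hexact : Function.Exact f g) (s : C →ₗ[R] B) (hs : ∀ c, g (s c) = c)
    (η : B →ₗ[R] M) (hη : ∀ a, η (f a) = 0) :
    ∃ φ : C →ₗ[R] M, ∀ b, φ (g b) = η b := by
  refine ⟨η.comp s, fun b => ?_⟩
  have h1 : g (b - s (g b)) = 0 := by simp [hs]
  obtain ⟨a, ha⟩ := (hexact _).mp h1
  have h2 : η b - η (s (g b)) = 0 := by
    rw [← map_sub, ← ha]; exact hη a
  simpa [LinearMap.comp_apply] using (sub_eq_zero.mp h2).symm

/-- Extension along an injection with split cokernel. -/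
lemma aux_ext (f : A →ₗ[R] B) (g : B →ₗ[R] C) (hf : Function.Injective f)
    (hexact : Function.Exact f g) (s : C →ₗ[R] B) (hs : ∀ c, g (s c) = c)
    (α : A →ₗ[R] M) : ∃ β : B →ₗ[R] M, ∀ a, β (f a) = α a := by
  set e := LinearEquiv.ofInjective f hf with he
  have hmem : ∀ b : B, b - s (g b) ∈ LinearMap.range f := by
    intro b
    have h1 : g (b - s (g b)) = 0 := by simp [hs]
    obtain ⟨a, ha⟩ := (hexact _).mp h1
    exact ⟨a, ha⟩
  set t : B →ₗ[R] LinearMap.range f :=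
    LinearMap.codRestrict (LinearMap.range f) (LinearMap.id - s.comp g) hmem with ht
  refine ⟨α.comp (e.symm.toLinearMap.comp t), fun a => ?_⟩
  have hgf : g (f a) = 0 := (hexact (f a)).mpr ⟨a, rfl⟩
  have h1 : t (f a) = e a := by
    apply Subtype.ext
    simp [ht, he, hgf, LinearEquiv.ofInjective_apply]
  simp [LinearMap.comp_apply, h1]

end aux



/-- M-semistable complexes are closed under cones and cocones.
A conflation `X ↣ Y ↠ Z` in `K^{[-1,0]}(proj Λ)` is represented (see Remark 2.2 of the paper,
after absorbing a contractible summand `P = P` into `Y`) by a degreewise short exact sequence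
of 2-term complexes of finitely generated projective `Λ`-modules.  If `X` and `Y` are
`M`-semistable then so is `Z`; dually, if `Y` and `Z` are `M`-semistable then so is `X`. -/
theorem stmt3 {k Λ : Type*} [Field k] [Ring Λ] [Algebra k Λ] [FiniteDimensional k Λ]
    {M : Type*} [AddCommGroup M] [Module Λ M] [Module.Finite Λ M]
    {Xm X0 Ym Y0 Zm Z0 : Type*}
    [AddCommGroup Xm] [Module Λ Xm] [Module.Finite Λ Xm] [Module.Projective Λ Xm]
    [AddCommGroup X0] [Module Λ X0] [Module.Finite Λ X0] [Module.Projective Λ X0]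
    [AddCommGroup Ym] [Module Λ Ym] [Module.Finite Λ Ym] [Module.Projective Λ Ym]
    [AddCommGroup Y0] [Module Λ Y0] [Module.Finite Λ Y0] [Module.Projective Λ Y0]
    [AddCommGroup Zm] [Module Λ Zm] [Module.Finite Λ Zm] [Module.Projective Λ Zm]
    [AddCommGroup Z0] [Module Λ Z0] [Module.Finite Λ Z0] [Module.Projective Λ Z0]
    (dx : Xm →ₗ[Λ] X0) (dy : Ym →ₗ[Λ] Y0) (dz : Zm →ₗ[Λ] Z0)
    -- the conflation `X ↣ Y ↠ Z`
    (fm : Xm →ₗ[Λ] Ym) (f0 : X0 →ₗ[Λ] Y0) (gm : Ym →ₗ[Λ] Zm) (g0 : Y0 →ₗ[Λ] Z0)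
    (hf : f0.comp dx = dy.comp fm) (hg : g0.comp dy = dz.comp gm)
    (hmono_m : Function.Injective fm) (hexact_m : Function.Exact fm gm)
    (hepi_m : Function.Surjective gm)
    (hmono_0 : Function.Injective f0) (hexact_0 : Function.Exact f0 g0)
    (hepi_0 : Function.Surjective g0)
 :
    -- closure under cones: if `X` and `Y` are `M`-semistable then so is `Z`
    (((Function.Bijective fun φ : X0 →ₗ[Λ] M => φ.comp dx) ∧
        (Function.Bijective fun φ : Y0 →ₗ[Λ] M => φ.comp dy)) →
      (Function.Bijective fun φ : Z0 →ₗ[Λ] M => φ.comp dz)) ∧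
    -- closure under cocones: if `Y` and `Z` are `M`-semistable then so is `X`
    (((Function.Bijective fun φ : Y0 →ₗ[Λ] M => φ.comp dy) ∧
        (Function.Bijective fun φ : Z0 →ₗ[Λ] M => φ.comp dz)) →
      (Function.Bijective fun φ : X0 →ₗ[Λ] M => φ.comp dx)) := by
  -- pointwise commutativity
  have hf' : ∀ x, f0 (dx x) = dy (fm x) := fun x => DFunLike.congr_fun hf x
  have hg' : ∀ y, g0 (dy y) = dz (gm y) := fun y => DFunLike.congr_fun hg y
  -- sections of the surjections, from projectivity of Z⁰ and Z⁻¹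
  obtain ⟨s0, hs0⟩ := Module.projective_lifting_property g0 LinearMap.id hepi_0
  have hs0' : ∀ c, g0 (s0 c) = c := fun c => DFunLike.congr_fun hs0 c
  obtain ⟨sm, hsm⟩ := Module.projective_lifting_property gm LinearMap.id hepi_m
  have hsm' : ∀ c, gm (sm c) = c := fun c => DFunLike.congr_fun hsm c
  constructor
  · -- cones
    rintro ⟨bX, bY⟩
    constructor
    · -- injectivity
      intro φ ψ h
      have h1 : (φ.comp g0).comp dy = (ψ.comp g0).comp dy := by
        ext ym
        simp only [LinearMap.comp_apply, hg' ym]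
        exact DFunLike.congr_fun h (gm ym)
      have h2 := bY.1 h1
      ext z
      obtain ⟨y, rfl⟩ := hepi_0 z
      exact DFunLike.congr_fun h2 y
    · -- surjectivity
      intro ψ
      obtain ⟨η, hη⟩ := bY.2 (ψ.comp gm)
      have h0 : η.comp f0 = 0 := by
        apply bX.1
        ext x
        simp only [LinearMap.comp_apply, LinearMap.zero_apply, hf' x]
        have : gm (fm x) = 0 := (hexact_m (fm x)).mpr ⟨x, rfl⟩
        calc η (dy (fm x)) = ψ (gm (fm x)) := DFunLike.congr_fun hη (fm x)
          _ = 0 := by rw [this, map_zero]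
      obtain ⟨φ, hφ⟩ := aux_factor f0 g0 hexact_0 s0 hs0' η
        (fun a => DFunLike.congr_fun h0 a)
      refine ⟨φ, ?_⟩
      ext zm
      obtain ⟨ym, rfl⟩ := hepi_m zm
      calc φ (dz (gm ym)) = φ (g0 (dy ym)) := by rw [hg' ym]
        _ = η (dy ym) := hφ (dy ym)
        _ = ψ (gm ym) := DFunLike.congr_fun hη ym
  · -- cocones
    rintro ⟨bY, bZ⟩
    constructor
    · -- injectivity
      intro φ ψ h
      set α : X0 →ₗ[Λ] M := φ - ψ with hα
      have hα0 : ∀ x, α (dx x) = 0 := by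
        intro x
        have := DFunLike.congr_fun h x
        simp only [LinearMap.comp_apply] at this
        simp [hα, this]
      obtain ⟨β, hβ⟩ := aux_ext f0 g0 hmono_0 hexact_0 s0 hs0' α
      have hkill : ∀ x, (β.comp dy) (fm x) = 0 := by
        intro x
        simp only [LinearMap.comp_apply, ← hf' x]
        rw [hβ (dx x)]
        exact hα0 x
      obtain ⟨ψ', hψ'⟩ := aux_factor fm gm hexact_m sm hsm' (β.comp dy) hkill
      obtain ⟨ζ, hζ⟩ := bZ.2 ψ'
      have hβζ : β = ζ.comp g0 := by
        apply bY.1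
        ext ym
        simp only [LinearMap.comp_apply, hg' ym]
        calc β (dy ym) = ψ' (gm ym) := (hψ' ym).symm
          _ = ζ (dz (gm ym)) := (DFunLike.congr_fun hζ (gm ym)).symm
      have hαzero : α = 0 := by
        ext x
        have h1 : g0 (f0 x) = 0 := (hexact_0 (f0 x)).mpr ⟨x, rfl⟩
        calc α x = β (f0 x) := (hβ x).symm
          _ = ζ (g0 (f0 x)) := by rw [hβζ]; rfl
          _ = 0 := by rw [h1, map_zero]
        -- close the `= 0` goal for `(0 : _) x`
      have := sub_eq_zero.mp hαzero
      exact this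
    · -- surjectivity
      intro ψ
      obtain ⟨β, hβ⟩ := aux_ext fm gm hmono_m hexact_m sm hsm' ψ
      obtain ⟨η, hη⟩ := bY.2 β
      refine ⟨η.comp f0, ?_⟩
      ext x
      calc η (f0 (dx x)) = η (dy (fm x)) := by rw [hf' x]
        _ = β (fm x) := DFunLike.congr_fun hη (fm x)
        _ = ψ x := hβ x
end

section
/- Let Λ be a finite-dimensional algebra, M a Λ-module, and suppose X is an M-semistable object of K^{[-1,0]}(proj Λ). Then for every inflation Y ↣ X (a morphism fitting into a conflation Y ↣ X ↠ Z in K^{[-1,0]}(proj Λ)), one has ⟨[Y], [M]⟩ ≥ 0, i.e. dim Hom(Y⁰, M) ≥ dim Hom(Y⁻¹, M). -/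
/-- If `X` is an `M`-semistable object of `K^{[-1,0]}(proj Λ)`, then for
every inflation `Y ↣ X`, i.e. a morphism fitting into a conflation `Y ↣ X ↠ Z` (represented,
as in Remark 2.2 of the paper, by a degreewise short exact sequence of 2-term complexes of
finitely generated projective modules), one has
`⟨[Y],[M]⟩ = dim Hom(Y⁰, M) − dim Hom(Y⁻¹, M) ≥ 0`. -/
theorem stmt5 {k Λ : Type*} [Field k] [Ring Λ] [Algebra k Λ] [FiniteDimensional k Λ]
    {M : Type*} [AddCommGroup M] [Module Λ M] [Module k M] [IsScalarTower k Λ M]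
    [SMulCommClass Λ k M] [Module.Finite Λ M]
    {Ym Y0 Xm X0 Zm Z0 : Type*}
    [AddCommGroup Ym] [Module Λ Ym] [Module.Finite Λ Ym] [Module.Projective Λ Ym]
    [AddCommGroup Y0] [Module Λ Y0] [Module.Finite Λ Y0] [Module.Projective Λ Y0]
    [AddCommGroup Xm] [Module Λ Xm] [Module.Finite Λ Xm] [Module.Projective Λ Xm]
    [AddCommGroup X0] [Module Λ X0] [Module.Finite Λ X0] [Module.Projective Λ X0]
    [AddCommGroup Zm] [Module Λ Zm] [Module.Finite Λ Zm] [Module.Projective Λ Zm]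
    [AddCommGroup Z0] [Module Λ Z0] [Module.Finite Λ Z0] [Module.Projective Λ Z0]
    (dy : Ym →ₗ[Λ] Y0) (dx : Xm →ₗ[Λ] X0) (dz : Zm →ₗ[Λ] Z0)
    -- the conflation `Y ↣ X ↠ Z`
    (fm : Ym →ₗ[Λ] Xm) (f0 : Y0 →ₗ[Λ] X0) (gm : Xm →ₗ[Λ] Zm) (g0 : X0 →ₗ[Λ] Z0)
    (hf : f0.comp dy = dx.comp fm) (hg : g0.comp dx = dz.comp gm)
    (hmono_m : Function.Injective fm) (hexact_m : Function.Exact fm gm)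
    (hepi_m : Function.Surjective gm)
    (hmono_0 : Function.Injective f0) (hexact_0 : Function.Exact f0 g0)
    (hepi_0 : Function.Surjective g0)
    -- `X` is `M`-semistable
    (hX : Function.Bijective fun φ : X0 →ₗ[Λ] M => φ.comp dx) :
    Module.finrank k (Ym →ₗ[Λ] M) ≤ Module.finrank k (Y0 →ₗ[Λ] M) := by
  classical
  -- `M` is finite dimensional over `k`
  have hMfin : Module.Finite k M := Module.Finite.trans Λ M
  -- Step 1: `fm` is a split monomorphism; construct a retraction `r`.
  obtain ⟨s, hs⟩ := Module.projective_lifting_property gm (LinearMap.id (M := Zm)) hepi_m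
  have hs' : ∀ z, gm (s z) = z := fun z => congrArg (fun h => h z) hs
  set p : Xm →ₗ[Λ] Xm := LinearMap.id - s.comp gm with hp_def
  have hp : ∀ x, p x ∈ LinearMap.range fm := by
    intro x
    have : gm (p x) = 0 := by
      simp [hp_def, hs']
    exact (hexact_m (p x)).mp this
  set e : Ym ≃ₗ[Λ] LinearMap.range fm := LinearEquiv.ofInjective fm hmono_m with he_def
  set r : Xm →ₗ[Λ] Ym :=
    e.symm.toLinearMap.comp (p.codRestrict (LinearMap.range fm) hp) with hr_def
  have hr : ∀ y : Ym, r (fm y) = y := by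
    intro y
    have hgmf : gm (fm y) = 0 := hexact_m.apply_apply_eq_zero y
    have hpf : p (fm y) = fm y := by simp [hp_def, hgmf]
    apply hmono_m
    have : (e (e.symm ⟨fm y, ⟨y, rfl⟩⟩) : Xm) = fm y := by
      rw [e.apply_symm_apply]
    calc fm (r (fm y)) = (e (e.symm ⟨p (fm y), hp (fm y)⟩) : Xm) := by
          simp [hr_def, he_def, LinearEquiv.ofInjective_apply]
      _ = p (fm y) := by rw [e.apply_symm_apply]
      _ = fm y := hpf
  -- Step 2: the precomposition map `Hom(Y0, M) → Hom(Ym, M)` is surjective.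
  set T : (Y0 →ₗ[Λ] M) →ₗ[k] (Ym →ₗ[Λ] M) :=
    { toFun := fun φ => φ.comp dy
      map_add' := fun φ ψ => by ext y; simp
      map_smul' := fun c φ => by ext y; simp } with hT_def
  have hTsurj : Function.Surjective T := by
    intro ψ
    obtain ⟨φ, hφ⟩ := hX.surjective (ψ.comp r)
    refine ⟨φ.comp f0, ?_⟩
    have hφ' : φ.comp dx = ψ.comp r := hφ
    ext y
    have h1 : f0 (dy y) = dx (fm y) := congrArg (fun h => h y) hf
    simp only [hT_def, LinearMap.coe_mk, AddHom.coe_mk, LinearMap.comp_apply]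
    rw [h1]
    have : φ (dx (fm y)) = ψ (r (fm y)) := congrArg (fun h => h (fm y)) hφ'
    rw [this, hr]
  -- Step 3: finiteness of `Hom(Y0, M)` over `k`, via evaluation on generators.
  obtain ⟨n, gen, hgen⟩ := Module.Finite.exists_fin (R := Λ) (M := Y0)
  set ev : (Y0 →ₗ[Λ] M) →ₗ[k] (Fin n → M) :=
    { toFun := fun φ => fun i => φ (gen i)
      map_add' := fun φ ψ => by ext i; simp
      map_smul' := fun c φ => by ext i; simp } with hev_def
  have hevinj : Function.Injective ev := by
    intro φ ψ h
    have h' : ∀ i, φ (gen i) = ψ (gen i) := fun i => congrFun h i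
    ext y
    have hy : y ∈ Submodule.span Λ (Set.range gen) := hgen ▸ Submodule.mem_top
    induction hy using Submodule.span_induction with
    | mem x hx => obtain ⟨i, rfl⟩ := hx; exact h' i
    | zero => simp
    | add x y _ _ hx hy => simp [hx, hy]
    | smul c x _ hx => simp [hx]
  have : FiniteDimensional k (Y0 →ₗ[Λ] M) :=
    FiniteDimensional.of_injective ev hevinj
  -- Step 4: conclude.
  have h1 := T.finrank_range_le
  rwa [LinearMap.range_eq_top.mpr hTsurj, finrank_top] at h1
end

section
/- Let K be an extriangulated category and let C be a full additive subcategory of K closed under extensions and containing 0. Then ι(C) = { X ∈ K : there exists an inflation X ↣ C with C ∈ C } is closed under extensions, provided K is hereditary (E²(−,−) = 0). -/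
/-! **Statement 6.**  We model a hereditary extriangulated category `K` (as in the paper,
e.g. `K^{[-1,0]}(proj Λ)`) as an extension-closed full subcategory of a triangulated
category `D`, the conflations of `K` being the triangles of `D` all of whose terms lie
in `K`; hereditary means `E²(X,Y) = Hom_D(X, Y⟦2⟧) = 0` for all `X, Y ∈ K`. -/

open CategoryTheory Limits Pretriangulated

namespace Stmt6

variable {D : Type*} [Category D] [Preadditive D] [HasZeroObject D] [HasBinaryBiproducts D]
  [HasShift D ℤ] [∀ n : ℤ, (CategoryTheory.shiftFunctor D n).Additive]
  [Pretriangulated D] [IsTriangulated D]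

/-- A conflation of the extriangulated category `K`. -/
def IsConflation (K : Set D) {X Y Z : D} (f : X ⟶ Y) (g : Y ⟶ Z) : Prop :=
  X ∈ K ∧ Y ∈ K ∧ Z ∈ K ∧ ∃ h : Z ⟶ X⟦(1 : ℤ)⟧, Triangle.mk f g h ∈ distTriang D

/-- `X` admits an inflation into an object of `C`. -/
def MemIota (K C : Set D) (X : D) : Prop :=
  ∃ (C₁ : D) (_ : C₁ ∈ C) (i : X ⟶ C₁) (W : D) (p : C₁ ⟶ W), IsConflation K i p

/-- Let `K` be a hereditary extriangulated category and `C ⊆ K` a full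
additive subcategory closed under extensions and containing `0`.  Then
`ι(C) = { X : ∃ inflation X ↣ C, C ∈ C }` is closed under extensions. -/
theorem stmt6 (K : Set D)
    (hKiso : ∀ {A B : D}, (A ≅ B) → A ∈ K → B ∈ K)
    (hKzero : ∀ Z : D, IsZero Z → Z ∈ K)
    (hKext : ∀ {X Y Z : D} (f : X ⟶ Y) (g : Y ⟶ Z) (h : Z ⟶ X⟦(1 : ℤ)⟧),
      Triangle.mk f g h ∈ (distTriang D) → X ∈ K → Z ∈ K → Y ∈ K)
    -- `K` is hereditary
    (hered : ∀ {X Y : D}, X ∈ K → Y ∈ K → ∀ φ : X ⟶ Y⟦(2 : ℤ)⟧, φ = 0)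
    -- `C` is a full additive subcategory of `K`, closed under extensions, containing `0`
    (C : Set D) (hCK : C ⊆ K) (hC0 : ∀ Z : D, IsZero Z → Z ∈ C)
    (hCiso : ∀ {A B : D}, (A ≅ B) → A ∈ C → B ∈ C)
    (hCadd : ∀ {A B : D}, A ∈ C → B ∈ C → (A ⊞ B) ∈ C)
    (hCext : ∀ {X Y Z : D} (f : X ⟶ Y) (g : Y ⟶ Z),
      IsConflation K f g → X ∈ C → Z ∈ C → Y ∈ C) :
    -- then `ι(C)` is closed under extensions
    ∀ {X Y Z : D} (f : X ⟶ Y) (g : Y ⟶ Z), IsConflation K f g →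
      MemIota K C X → MemIota K C Z → MemIota K C Y := by
  intro X Y Z f g hCon hMX hMZ
  obtain ⟨hXK, hYK, hZK, h, hT1⟩ := hCon
  obtain ⟨CX, hCXC, iX, WX, pX, -, hCXK, hWXK, hX3, hTX⟩ := hMX
  obtain ⟨CZ, hCZC, iZ, WZ, pZ, -, hCZK, hWZK, hZ3, hTZ⟩ := hMZ
  -- key vanishing lemma from hereditariness
  have key : ∀ {A B : D}, A ∈ K → B ∈ K →
      ∀ ψ : A⟦(-1 : ℤ)⟧ ⟶ B⟦(1 : ℤ)⟧, ψ = 0 := by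
    intro A B hA hB ψ
    have eA : (A⟦(-1 : ℤ)⟧)⟦(1 : ℤ)⟧ ≅ A :=
      (shiftFunctorCompIsoId D (-1 : ℤ) (1 : ℤ) (by omega)).app A
    have eB : B⟦(2 : ℤ)⟧ ≅ (B⟦(1 : ℤ)⟧)⟦(1 : ℤ)⟧ :=
      (shiftFunctorAdd' D (1 : ℤ) (1 : ℤ) (2 : ℤ) (by omega)).app B
    have h0 : eA.inv ≫ ψ⟦(1 : ℤ)⟧' ≫ eB.inv = 0 := hered hA hB _
    have h1 : ψ⟦(1 : ℤ)⟧' = 0 := by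
      have h2 := congrArg (fun t => eA.hom ≫ t ≫ eB.hom) h0
      simpa using h2
    exact (shiftFunctor D (1 : ℤ)).map_injective (by rw [h1, Functor.map_zero])
  -- inverse rotation of the Z-conflation triangle
  obtain ⟨wZ, cZ, hTZi⟩ :
      ∃ (a : WZ⟦(-1 : ℤ)⟧ ⟶ Z) (c : CZ ⟶ (WZ⟦(-1 : ℤ)⟧)⟦(1 : ℤ)⟧),
        Triangle.mk a iZ c ∈ distTriang D :=
    ⟨_, _, inv_rot_of_distTriang _ hTZ⟩
  -- inverse rotation of the X-conflation triangle
  obtain ⟨wX, cX, hTXi⟩ :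
      ∃ (a : WX⟦(-1 : ℤ)⟧ ⟶ X) (c : CX ⟶ (WX⟦(-1 : ℤ)⟧)⟦(1 : ℤ)⟧),
        Triangle.mk a iX c ∈ distTriang D :=
    ⟨_, _, inv_rot_of_distTriang _ hTX⟩
  -- lift wZ : WZ⟦-1⟧ ⟶ Z through g, using hereditariness
  obtain ⟨lam, hlam⟩ :=
    Triangle.coyoneda_exact₂ _ (rot_of_distTriang _ hT1) wZ (key hWZK hXK _)
  -- V := cone(lam) ; this is the homotopy pullback of Y → Z ← "ker pZ"
  obtain ⟨V, yv, wv, hTV⟩ := distinguished_cocone_triangle lam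
  -- first octahedron: V sits in a triangle  X⟦1⟧⟦-1⟧ → V → CZ
  have O1 := Triangulated.someOctahedron hlam.symm hTV (rot_of_distTriang _ hT1) hTZi
  obtain ⟨aV, bV, cV, hTVi⟩ :
      ∃ (a : (X⟦(1 : ℤ)⟧)⟦(-1 : ℤ)⟧ ⟶ V) (b : V ⟶ CZ)
        (c : CZ ⟶ ((X⟦(1 : ℤ)⟧)⟦(-1 : ℤ)⟧)⟦(1 : ℤ)⟧),
        Triangle.mk a b c ∈ distTriang D :=
    ⟨_, _, _, inv_rot_of_distTriang _ O1.mem⟩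
  have e1 : (X⟦(1 : ℤ)⟧)⟦(-1 : ℤ)⟧ ≅ X :=
    (shiftFunctorCompIsoId D (1 : ℤ) (-1 : ℤ) (by omega)).app X
  have hVK : V ∈ K := hKext _ _ _ hTVi (hKiso e1.symm hXK) hCZK
  -- transport the inverse-rotated X-triangle along e1
  have hT2 : Triangle.mk (wX ≫ e1.inv) (e1.hom ≫ iX) cX ∈ distTriang D := by
    refine isomorphic_distinguished _ hTXi _ ?_
    exact Triangle.isoMk _ _ (Iso.refl _) e1 (Iso.refl _) (by simp [Triangle.mk]) (by simp [Triangle.mk])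
      (by simp [Triangle.mk])
  -- U := cone( WX⟦-1⟧ → X⟦1⟧⟦-1⟧ → V )
  obtain ⟨U, vU, wU, hTU⟩ := distinguished_cocone_triangle ((wX ≫ e1.inv) ≫ aV)
  -- second octahedron:  CX → U → CZ  is distinguished
  have O2 := Triangulated.someOctahedron (u₁₂ := wX ≫ e1.inv) (u₂₃ := aV)
    rfl hT2 hTVi hTU
  have hUK : U ∈ K := hKext _ _ _ O2.mem hCXK hCZK
  have hUC : U ∈ C := hCext O2.m₁ O2.m₃ ⟨hCXK, hUK, hCZK, _, O2.mem⟩ hCXC hCZC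
  -- W := cone( Y → V → U )
  obtain ⟨W, vW, wW, hTW⟩ := distinguished_cocone_triangle (yv ≫ vU)
  -- third octahedron:  WZ⟦-1⟧⟦1⟧ → W → WX⟦-1⟧⟦1⟧  is distinguished
  have O3 := Triangulated.someOctahedron (u₁₂ := yv) (u₂₃ := vU)
    rfl (rot_of_distTriang _ hTV) (rot_of_distTriang _ hTU) hTW
  have hWK : W ∈ K := by
    refine hKext _ _ _ O3.mem ?_ ?_
    · exact hKiso ((shiftFunctorCompIsoId D (-1 : ℤ) (1 : ℤ) (by omega)).app WZ).symm hWZK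
    · exact hKiso ((shiftFunctorCompIsoId D (-1 : ℤ) (1 : ℤ) (by omega)).app WX).symm hWXK
  exact ⟨U, hUC, yv ≫ vU, W, vW, hYK, hUK, hWK, wW, hTW⟩

end Stmt6
end

section
/- Let X be a resolving subcategory of the extriangulated category K^{[-1,0]}(proj Λ). Then β(X) = { X ∈ X : for every conflation X ↣ X' ↠ X'' with X' ∈ X, also X'' ∈ X } is closed under direct summands. -/
/-! **Statement 8.**  `K^{[-1,0]}(proj Λ)` is realized concretely as the full subcategory of
the homotopy category of cochain complexes of `Λ`-modules consisting of objects isomorphic to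
complexes of finitely generated projective modules concentrated in degrees `-1, 0`; its
conflations are the distinguished triangles all of whose terms lie in this subcategory. -/

open CategoryTheory Limits Pretriangulated

namespace Stmt8

universe u
variable (Λ : Type u) [Ring Λ]

/-- The homotopy category of cochain complexes of `Λ`-modules. -/
abbrev HtpyCat := HomotopyCategory (ModuleCat.{u} Λ) (ComplexShape.up ℤ)

/-- The subcategory `K^{[-1,0]}(proj Λ)`. -/
def KLam : Set (HtpyCat Λ) :=
  {X | ∃ C : CochainComplex (ModuleCat.{u} Λ) ℤ,
    (∀ i : ℤ, i ≠ -1 → i ≠ 0 → IsZero (C.X i)) ∧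
    Module.Projective Λ (C.X (-1)) ∧ Module.Projective Λ (C.X 0) ∧
    Module.Finite Λ (C.X (-1)) ∧ Module.Finite Λ (C.X 0) ∧
    Nonempty (X ≅ (HomotopyCategory.quotient _ _).obj C)}

/-- Conflations of `K^{[-1,0]}(proj Λ)`. -/
def IsConflation {X Y Z : HtpyCat Λ} (f : X ⟶ Y) (g : Y ⟶ Z) : Prop :=
  X ∈ KLam Λ ∧ Y ∈ KLam Λ ∧ Z ∈ KLam Λ ∧
    ∃ h : Z ⟶ X⟦(1 : ℤ)⟧, Triangle.mk f g h ∈ distTriang (HtpyCat Λ)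

/-- `Z` is a direct sum of `A` and `B`. -/
def IsBiprodDecomp (Z A B : HtpyCat Λ) : Prop :=
  ∃ (iA : A ⟶ Z) (iB : B ⟶ Z) (pA : Z ⟶ A) (pB : Z ⟶ B),
    iA ≫ pA = 𝟙 A ∧ iB ≫ pB = 𝟙 B ∧ iA ≫ pB = 0 ∧ iB ≫ pA = 0 ∧
      pA ≫ iA + pB ≫ iB = 𝟙 Z

/-- `X` is a resolving subcategory of `K^{[-1,0]}(proj Λ)`: it is closed under extensions,
cocones and direct summands, and every object of `K` is the cone of a conflation with middle
term in `X` (equivalently, `X` contains all projective objects). -/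
def Resolving (X : Set (HtpyCat Λ)) : Prop :=
  X ⊆ KLam Λ ∧
  (∀ Z ∈ KLam Λ, ∃ (A B : HtpyCat Λ) (f : A ⟶ B) (g : B ⟶ Z),
    A ∈ KLam Λ ∧ B ∈ X ∧ IsConflation Λ f g) ∧
  (∀ ⦃A B C : HtpyCat Λ⦄ (f : A ⟶ B) (g : B ⟶ C),
    IsConflation Λ f g → A ∈ X → C ∈ X → B ∈ X) ∧
  (∀ ⦃A B C : HtpyCat Λ⦄ (f : A ⟶ B) (g : B ⟶ C),
    IsConflation Λ f g → B ∈ X → C ∈ X → A ∈ X) ∧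
  (∀ Z A B : HtpyCat Λ, IsBiprodDecomp Λ Z A B → Z ∈ X → A ∈ X)

/-- `β(X) = { X ∈ X : every conflation X ↣ X' ↠ X'' with X' ∈ X has X'' ∈ X }`. -/
def beta (X : Set (HtpyCat Λ)) : Set (HtpyCat Λ) :=
  {A | A ∈ X ∧ ∀ ⦃B C : HtpyCat Λ⦄ (f : A ⟶ B) (g : B ⟶ C),
    IsConflation Λ f g → B ∈ X → C ∈ X}

noncomputable section

lemma sum_triangle_dist {A B' Cc : HtpyCat Λ} (B : HtpyCat Λ)
    (f : A ⟶ B') (g : B' ⟶ Cc) (h : Cc ⟶ A⟦(1 : ℤ)⟧)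
    (hT : Triangle.mk f g h ∈ distTriang (HtpyCat Λ)) :
    Triangle.mk (biprod.map f (𝟙 B)) ((biprod.fst : B' ⊞ B ⟶ B') ≫ g)
      (h ≫ (biprod.inl : A ⟶ A ⊞ B)⟦(1 : ℤ)⟧') ∈ distTriang (HtpyCat Λ) := by
  obtain ⟨Y, g', h', hT'⟩ := distinguished_cocone_triangle (biprod.map f (𝟙 B))
  obtain ⟨c, hc₂, hc₃⟩ : ∃ c : Y ⟶ Cc, g' ≫ c = biprod.fst ≫ g ∧
      h' ≫ (biprod.fst : A ⊞ B ⟶ A)⟦(1 : ℤ)⟧' = c ≫ h := complete_distinguished_triangle_morphism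
    (Triangle.mk (biprod.map f (𝟙 B)) g' h') (Triangle.mk f g h) hT' hT
    biprod.fst biprod.fst (by exact biprod.map_fst _ _)
  obtain ⟨z, hz₂, hz₃⟩ : ∃ z : Y ⟶ (contractibleTriangle B).obj₃, g' ≫ z = biprod.snd ≫ 0 ∧
      h' ≫ (biprod.snd : A ⊞ B ⟶ B)⟦(1 : ℤ)⟧' = z ≫ 0 := complete_distinguished_triangle_morphism
    (Triangle.mk (biprod.map f (𝟙 B)) g' h') (contractibleTriangle B) hT'
    (contractible_distinguished B) biprod.snd biprod.snd (by exact biprod.map_snd _ _)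
  rw [comp_zero] at hz₃
  -- hz₃ : h' ≫ snd⟦1⟧' = 0
  have hdecomp : h' = c ≫ h ≫ (biprod.inl : A ⟶ A ⊞ B)⟦(1 : ℤ)⟧' := by
    have htot : (biprod.fst : A ⊞ B ⟶ A)⟦(1 : ℤ)⟧' ≫ (biprod.inl : A ⟶ A ⊞ B)⟦(1 : ℤ)⟧'
        + (biprod.snd : A ⊞ B ⟶ B)⟦(1 : ℤ)⟧' ≫ (biprod.inr : B ⟶ A ⊞ B)⟦(1 : ℤ)⟧'
        = 𝟙 ((A ⊞ B)⟦(1 : ℤ)⟧) := by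
      rw [← Functor.map_comp, ← Functor.map_comp, ← Functor.map_add, biprod.total,
        CategoryTheory.Functor.map_id]
    calc h' = h' ≫ 𝟙 _ := by rw [Category.comp_id]
      _ = h' ≫ ((biprod.fst : A ⊞ B ⟶ A)⟦(1 : ℤ)⟧' ≫ (biprod.inl : A ⟶ A ⊞ B)⟦(1 : ℤ)⟧'
          + (biprod.snd : A ⊞ B ⟶ B)⟦(1 : ℤ)⟧' ≫ (biprod.inr : B ⟶ A ⊞ B)⟦(1 : ℤ)⟧') := by
          rw [htot]
      _ = (h' ≫ (biprod.fst : A ⊞ B ⟶ A)⟦(1 : ℤ)⟧') ≫ (biprod.inl : A ⟶ A ⊞ B)⟦(1 : ℤ)⟧'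
          + (h' ≫ (biprod.snd : A ⊞ B ⟶ B)⟦(1 : ℤ)⟧') ≫ (biprod.inr : B ⟶ A ⊞ B)⟦(1 : ℤ)⟧' := by
          rw [Preadditive.comp_add, Category.assoc, Category.assoc]
      _ = c ≫ h ≫ (biprod.inl : A ⟶ A ⊞ B)⟦(1 : ℤ)⟧' := by
          rw [hc₃, hz₃, zero_comp, add_zero, Category.assoc]
  -- a right inverse up to iso
  obtain ⟨d, hd₂, hd₃⟩ : ∃ d : Cc ⟶ Y, g ≫ d = biprod.inl ≫ g' ∧
      h ≫ (biprod.inl : A ⟶ A ⊞ B)⟦(1 : ℤ)⟧' = d ≫ h' := complete_distinguished_triangle_morphism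
    (Triangle.mk f g h) (Triangle.mk (biprod.map f (𝟙 B)) g' h') hT hT'
    biprod.inl biprod.inl (by exact (biprod.inl_map _ _).symm)
  have hdc : IsIso (d ≫ c) := by
    let θ : Triangle.mk f g h ⟶ Triangle.mk f g h :=
      { hom₁ := 𝟙 A
        hom₂ := 𝟙 B'
        hom₃ := d ≫ c
        comm₁ := by exact (Category.comp_id f).trans (Category.id_comp f).symm
        comm₂ := by
          change g ≫ (d ≫ c) = 𝟙 B' ≫ g
          rw [Category.id_comp, ← Category.assoc, hd₂, Category.assoc, hc₂,
            ← Category.assoc, biprod.inl_fst, Category.id_comp]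
        comm₃ := by
          change h ≫ (𝟙 A)⟦(1 : ℤ)⟧' = (d ≫ c) ≫ h
          rw [CategoryTheory.Functor.map_id, Category.comp_id, Category.assoc, ← hc₃,
            ← Category.assoc, ← hd₃, Category.assoc, ← Functor.map_comp, biprod.inl_fst,
            CategoryTheory.Functor.map_id, Category.comp_id] }
    exact isIso₃_of_isIso₁₂ θ hT hT (inferInstanceAs (IsIso (𝟙 A)))
      (inferInstanceAs (IsIso (𝟙 B')))
  have hmono : Mono c := by
    rw [Preadditive.mono_iff_cancel_zero]
    intro W u hu
    have hu3 : u ≫ h' = 0 := by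
      rw [hdecomp, ← Category.assoc, hu, zero_comp]
    obtain ⟨v, hv⟩ : ∃ v : W ⟶ B' ⊞ B, u = v ≫ g' := Triangle.coyoneda_exact₃ _ hT' u hu3
    have h2 : (v ≫ biprod.fst) ≫ g = 0 := by
      have : v ≫ g' ≫ c = 0 := by rw [← Category.assoc, ← hv, hu]
      rw [hc₂] at this
      rw [Category.assoc]
      exact this
    obtain ⟨w, hw⟩ : ∃ w : W ⟶ A, v ≫ biprod.fst = w ≫ f :=
      Triangle.coyoneda_exact₂ _ hT (v ≫ biprod.fst) h2
    have hfac : v = biprod.lift w (v ≫ biprod.snd) ≫ biprod.map f (𝟙 B) := by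
      apply biprod.hom_ext
      · simpa using hw
      · simp
    have hzz : biprod.map f (𝟙 B) ≫ g' = 0 :=
      comp_distTriang_mor_zero₁₂ _ hT'
    rw [hv, hfac, Category.assoc]
    exact (congrArg (fun t => biprod.lift w (v ≫ biprod.snd) ≫ t) hzz).trans comp_zero
  have hiso : IsIso c := by
    refine ⟨inv (d ≫ c) ≫ d, ?_, ?_⟩
    · rw [← cancel_mono c]
      simp
    · simp
  refine isomorphic_distinguished _ hT' _ ?_
  refine Triangle.isoMk _ _ (Iso.refl _) (Iso.refl _) (asIso c).symm ?_ ?_ ?_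
  · change biprod.map f (𝟙 B) ≫ 𝟙 _ = 𝟙 _ ≫ biprod.map f (𝟙 B); rw [Category.id_comp, Category.comp_id]
  · change ((biprod.fst : B' ⊞ B ⟶ B') ≫ g) ≫ inv c = 𝟙 _ ≫ g'
    rw [Category.id_comp, ← cancel_mono c, Category.assoc, IsIso.inv_hom_id,
      Category.comp_id, hc₂]
  · change (h ≫ (biprod.inl : A ⟶ A ⊞ B)⟦(1 : ℤ)⟧') ≫ (𝟙 (A ⊞ B))⟦(1 : ℤ)⟧' = inv c ≫ h'
    rw [CategoryTheory.Functor.map_id, Category.comp_id, hdecomp,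
      IsIso.inv_hom_id_assoc]


lemma klam_biprod {A B : HtpyCat Λ} (hA : A ∈ KLam Λ) (hB : B ∈ KLam Λ) :
    (A ⊞ B : HtpyCat Λ) ∈ KLam Λ := by
  obtain ⟨C₁, hz₁, hp₁, hp₁', hf₁, hf₁', ⟨e₁⟩⟩ := hA
  obtain ⟨C₂, hz₂, hp₂, hp₂', hf₂, hf₂', ⟨e₂⟩⟩ := hB
  have ev : ∀ i : ℤ, (C₁ ⊞ C₂).X i ≅ C₁.X i ⊞ C₂.X i := fun i =>
    (HomologicalComplex.eval (ModuleCat.{u} Λ) (ComplexShape.up ℤ) i).mapBiprod C₁ C₂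
  have equiv : ∀ i : ℤ, ((C₁ ⊞ C₂).X i : Type u) ≃ₗ[Λ] (↥(C₁.X i) × ↥(C₂.X i)) := fun i =>
    (ev i ≪≫ ModuleCat.biprodIsoProd (C₁.X i) (C₂.X i)).toLinearEquiv
  refine ⟨C₁ ⊞ C₂, fun i h1 h0 => ?_, ?_, ?_, ?_, ?_, ?_⟩
  · exact ((ev i).isZero_iff).2 (((biprod_isZero_iff _ _)).2 ⟨hz₁ i h1 h0, hz₂ i h1 h0⟩)
  · have : Module.Projective Λ (↥(C₁.X (-1)) × ↥(C₂.X (-1))) := by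
      have := hp₁; have := hp₂; infer_instance
    exact Module.Projective.of_equiv (equiv (-1)).symm
  · have : Module.Projective Λ (↥(C₁.X 0) × ↥(C₂.X 0)) := by
      have := hp₁'; have := hp₂'; infer_instance
    exact Module.Projective.of_equiv (equiv 0).symm
  · have : Module.Finite Λ (↥(C₁.X (-1)) × ↥(C₂.X (-1))) := by
      have := hf₁; have := hf₂; infer_instance
    exact Module.Finite.equiv (equiv (-1)).symm
  · have : Module.Finite Λ (↥(C₁.X 0) × ↥(C₂.X 0)) := by
      have := hf₁'; have := hf₂'; infer_instance
    exact Module.Finite.equiv (equiv 0).symm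
  · haveI := CategoryTheory.Limits.preservesBinaryBiproduct_of_preservesBiproduct
      (HomotopyCategory.quotient (ModuleCat.{u} Λ) (ComplexShape.up ℤ)) C₁ C₂
    exact ⟨biprod.mapIso e₁ e₂ ≪≫
      ((HomotopyCategory.quotient (ModuleCat.{u} Λ) (ComplexShape.up ℤ)).mapBiprod C₁ C₂).symm⟩

end

/-- If `X` is a resolving subcategory of `K^{[-1,0]}(proj Λ)`, then
`β(X)` is closed under direct summands. -/
theorem stmt8 (X : Set (HtpyCat Λ)) (hX : Resolving Λ X) :
    ∀ Z ∈ beta Λ X, ∀ A B : HtpyCat Λ, IsBiprodDecomp Λ Z A B → A ∈ beta Λ X := by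
  rintro Z ⟨hZX, hZb⟩ A B ⟨iA, iB, pA, pB, h1, h2, h3, h4, h5⟩
  obtain ⟨hXK, hres, hext, hcone, hsummand⟩ := hX
  have hAX : A ∈ X := hsummand Z A B ⟨iA, iB, pA, pB, h1, h2, h3, h4, h5⟩ hZX
  have hBX : B ∈ X := hsummand Z B A
    ⟨iB, iA, pB, pA, h2, h1, h4, h3, by rw [add_comm]; exact h5⟩ hZX
  refine ⟨hAX, ?_⟩
  intro B' C f g hconf hB'X
  obtain ⟨hAK, hB'K, hCK, h, hdist⟩ := hconf
  have e : Z ≅ A ⊞ B :=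
    { hom := biprod.lift pA pB
      inv := biprod.desc iA iB
      hom_inv_id := by rw [biprod.lift_desc, h5]
      inv_hom_id := by
        apply biprod.hom_ext' <;> apply biprod.hom_ext <;>
          simp [h1, h2, h3, h4] }
  have hEK : (B' ⊞ B : HtpyCat Λ) ∈ KLam Λ := klam_biprod Λ hB'K (hXK hBX)
  have hdist2 := sum_triangle_dist Λ B f g h hdist
  have hdist3 : Triangle.mk (e.hom ≫ biprod.map f (𝟙 B))
      ((biprod.fst : B' ⊞ B ⟶ B') ≫ g)
      (h ≫ (biprod.inl : A ⟶ A ⊞ B)⟦(1 : ℤ)⟧' ≫ e.inv⟦(1 : ℤ)⟧') ∈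
        distTriang (HtpyCat Λ) := by
    refine isomorphic_distinguished _ hdist2 _ ?_
    refine Triangle.isoMk _ _ e (Iso.refl _) (Iso.refl _) ?_ ?_ ?_
    · exact Category.comp_id _
    · exact (Category.comp_id _).trans (Category.id_comp _).symm
    · change (h ≫ (biprod.inl : A ⟶ A ⊞ B)⟦(1 : ℤ)⟧' ≫ e.inv⟦(1 : ℤ)⟧') ≫ e.hom⟦(1 : ℤ)⟧' =
        𝟙 _ ≫ (h ≫ (biprod.inl : A ⟶ A ⊞ B)⟦(1 : ℤ)⟧')
      rw [Category.id_comp, Category.assoc, Category.assoc, ← Functor.map_comp,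
        e.inv_hom_id, CategoryTheory.Functor.map_id, Category.comp_id]
  have hconfZ : IsConflation Λ (e.hom ≫ biprod.map f (𝟙 B))
      ((biprod.fst : B' ⊞ B ⟶ B') ≫ g) :=
    ⟨hXK hZX, hEK, hCK, _, hdist3⟩
  have hconfE : IsConflation Λ (biprod.inl : B' ⟶ B' ⊞ B)
      (biprod.snd : B' ⊞ B ⟶ B) :=
    ⟨hB'K, hEK, hXK hBX, 0, binaryBiproductTriangle_distinguished B' B⟩
  have hEX : (B' ⊞ B : HtpyCat Λ) ∈ X := hext _ _ hconfE hB'X hBX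
  exact hZb _ _ hconfZ hEX

end Stmt8
end

section
/- Let Λ be a finite-dimensional algebra, M a Λ-module, and C ⊆ K^{[-1,0]}(proj Λ) any collection of 2-term complexes. Then W(C) = { N ∈ mod Λ : every X ∈ C is N-semistable } is a wide subcategory of mod Λ: it is closed under kernels, cokernels, and extensions. -/
/-! **Statement 18.**  Objects of `K^{[-1,0]}(proj Λ)` are modelled by 2-term complexes
`X = (X⁻¹ →ˣ X⁰)` of finitely generated projective `Λ`-modules; `X` is `N`-semistable if
precomposition with `x` is an isomorphism `Hom(X⁰, N) ≅ Hom(X⁻¹, N)`. -/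

open CategoryTheory

namespace Stmt18

universe u
variable (Λ : Type u) [Ring Λ]

/-- A 2-term complex of finitely generated projective `Λ`-modules. -/
structure TT where
  /-- the degree `-1` term -/
  Pm : ModuleCat.{u} Λ
  /-- the degree `0` term -/
  P0 : ModuleCat.{u} Λ
  projm : Module.Projective Λ Pm
  proj0 : Module.Projective Λ P0
  finm : Module.Finite Λ Pm
  fin0 : Module.Finite Λ P0
  /-- the differential -/
  d : Pm →ₗ[Λ] P0

/-- `X` is `N`-semistable. -/
def SS (X : TT Λ) (N : ModuleCat.{u} Λ) : Prop :=
  Function.Bijective fun f : X.P0 →ₗ[Λ] N => f.comp X.d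

/-- `W(C)`: modules `N` such that every `X ∈ C` is `N`-semistable. -/
def W (C : Set (TT Λ)) : Set (ModuleCat.{u} Λ) :=
  {N | ∀ X ∈ C, SS Λ X N}

section Helpers

variable {Λ}

open LinearMap

/-- Injectivity restated: equal after precomposing with `d` implies equal. -/
lemma ss_inj {X : TT Λ} {N : ModuleCat.{u} Λ} (h : SS Λ X N)
    {f g : X.P0 →ₗ[Λ] N} (hfg : f.comp X.d = g.comp X.d) : f = g :=
  h.1 hfg

lemma ss_ker (X : TT Λ) {N N' : ModuleCat.{u} Λ} (φ : N →ₗ[Λ] N')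
    (hN : SS Λ X N) (hN' : SS Λ X N') :
    SS Λ X (ModuleCat.of Λ (LinearMap.ker φ)) := by
  constructor
  · intro f g h
    have h1 : ((ker φ).subtype ∘ₗ f) ∘ₗ X.d = ((ker φ).subtype ∘ₗ g) ∘ₗ X.d := by
      rw [LinearMap.comp_assoc, LinearMap.comp_assoc]
      exact congrArg (ker φ).subtype.comp h
    have h2 := ss_inj hN h1
    ext x
    exact LinearMap.congr_fun h2 x
  · intro g
    obtain ⟨f, hf⟩ := hN.2 ((ker φ).subtype ∘ₗ g)
    replace hf : f ∘ₗ X.d = (ker φ).subtype ∘ₗ g := hf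
    have h0 : φ ∘ₗ f = (0 : X.P0 →ₗ[Λ] N') := by
      apply ss_inj hN'
      rw [LinearMap.comp_assoc, hf]
      ext x
      simp [(g x).2]
    have hmem : ∀ x, f x ∈ ker φ := fun x => by
      simpa using LinearMap.congr_fun h0 x
    refine ⟨LinearMap.codRestrict (ker φ) f hmem, ?_⟩
    ext x
    exact LinearMap.congr_fun hf x

lemma ss_coker (X : TT Λ) {N N' : ModuleCat.{u} Λ} (φ : N →ₗ[Λ] N')
    (hN : SS Λ X N) (hN' : SS Λ X N') :
    SS Λ X (ModuleCat.of Λ (N' ⧸ LinearMap.range φ)) := by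
  have hPm := X.projm
  have hP0 := X.proj0
  set π := (LinearMap.range φ).mkQ with hπ
  have hπs : Function.Surjective π := Submodule.mkQ_surjective _
  constructor
  · intro f g h
    -- reduce to showing injectivity in a linear way: consider f - g
    suffices H : ∀ u : X.P0 →ₗ[Λ] (N' ⧸ LinearMap.range φ),
        u ∘ₗ X.d = 0 → u = 0 by
      have := H (f - g) (by
        have : f ∘ₗ X.d = g ∘ₗ X.d := h
        rw [LinearMap.sub_comp, this, sub_self])
      have := sub_eq_zero.mp this
      exact this
    intro u hu
    obtain ⟨u', hu'⟩ := Module.projective_lifting_property π u hπs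
    have hmem : ∀ x, (u' ∘ₗ X.d) x ∈ LinearMap.range φ := by
      intro x
      have : π ((u' ∘ₗ X.d) x) = 0 := by
        have := LinearMap.congr_fun hu x
        simpa [← hu'] using this
      simpa [hπ, Submodule.Quotient.mk_eq_zero] using this
    -- lift through φ using projectivity of Pm
    have hφs : Function.Surjective (LinearMap.rangeRestrict φ) :=
      LinearMap.surjective_rangeRestrict φ
    obtain ⟨w, hw⟩ := Module.projective_lifting_property (R := Λ)
      (LinearMap.rangeRestrict φ)
      (LinearMap.codRestrict (LinearMap.range φ) (u' ∘ₗ X.d) hmem) hφs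
    have hw' : φ ∘ₗ w = u' ∘ₗ X.d := by
      ext x
      exact congrArg Subtype.val (LinearMap.congr_fun hw x)
    obtain ⟨v, hv⟩ := hN.2 w
    replace hv : v ∘ₗ X.d = w := hv
    have : u' = φ ∘ₗ v := by
      apply ss_inj hN'
      rw [LinearMap.comp_assoc, hv, hw']
    rw [← hu', this, ← LinearMap.comp_assoc]
    ext x
    simp [hπ, π, Submodule.Quotient.mk_eq_zero]
  · intro g
    obtain ⟨g', hg'⟩ := Module.projective_lifting_property π g hπs
    obtain ⟨f', hf'⟩ := hN'.2 g'
    replace hf' : f' ∘ₗ X.d = g' := hf'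
    exact ⟨π ∘ₗ f', by show (π ∘ₗ f') ∘ₗ X.d = g; rw [LinearMap.comp_assoc, hf', hg']⟩

lemma ss_ext (X : TT Λ) {A E B : ModuleCat.{u} Λ} (i : A →ₗ[Λ] E) (p : E →ₗ[Λ] B)
    (hi : Function.Injective i) (hex : Function.Exact i p)
    (hp : Function.Surjective p) (hA : SS Λ X A) (hB : SS Λ X B) : SS Λ X E := by
  have hP0 := X.proj0
  have hker : LinearMap.ker p = LinearMap.range i := LinearMap.exact_iff.mp hex
  -- factor a map into `E` killed by `p` through `i`
  have factor : ∀ (M : Type u) [AddCommGroup M] [Module Λ M] (w : M →ₗ[Λ] E),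
      p ∘ₗ w = 0 → ∃ u : M →ₗ[Λ] A, i ∘ₗ u = w := by
    intro M _ _ w hw
    have hmem : ∀ x, w x ∈ LinearMap.range i := by
      intro x
      rw [← hker]
      simpa using LinearMap.congr_fun hw x
    refine ⟨(LinearEquiv.ofInjective i hi).symm.toLinearMap ∘ₗ
      LinearMap.codRestrict (LinearMap.range i) w hmem, ?_⟩
    ext x
    have : i ((LinearEquiv.ofInjective i hi).symm ⟨w x, hmem x⟩) =
        ((LinearEquiv.ofInjective i hi) ((LinearEquiv.ofInjective i hi).symm
          ⟨w x, hmem x⟩) : LinearMap.range i) := rfl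
    simp [this, LinearEquiv.apply_symm_apply]
  constructor
  · intro f g h
    suffices H : ∀ u : X.P0 →ₗ[Λ] E, u ∘ₗ X.d = 0 → u = 0 by
      have := H (f - g) (by
        have : f ∘ₗ X.d = g ∘ₗ X.d := h
        rw [LinearMap.sub_comp, this, sub_self])
      exact sub_eq_zero.mp this
    intro u hu
    have hpu : (p ∘ₗ u) = 0 := by
      apply ss_inj hB
      rw [LinearMap.comp_assoc, hu]
      simp
    obtain ⟨v, hv⟩ := factor X.P0 u hpu
    have hv0 : v = 0 := by
      apply ss_inj hA
      have h2 : i ∘ₗ (v ∘ₗ X.d) = 0 := by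
        rw [← LinearMap.comp_assoc, hv, hu]
      ext x
      apply hi
      simpa using LinearMap.congr_fun h2 x
    rw [← hv, hv0]
    simp
  · intro g
    obtain ⟨h, hh⟩ := hB.2 (p ∘ₗ g)
    replace hh : h ∘ₗ X.d = p ∘ₗ g := hh
    obtain ⟨h', hh'⟩ := Module.projective_lifting_property p h hp
    have hpz : p ∘ₗ (g - h' ∘ₗ X.d) = 0 := by
      rw [LinearMap.comp_sub, ← LinearMap.comp_assoc, hh', hh, sub_self]
    obtain ⟨u, hu⟩ := factor X.Pm (g - h' ∘ₗ X.d) hpz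
    obtain ⟨v, hv⟩ := hA.2 u
    replace hv : v ∘ₗ X.d = u := hv
    refine ⟨h' + i ∘ₗ v, ?_⟩
    show (h' + i ∘ₗ v) ∘ₗ X.d = g
    rw [LinearMap.add_comp, LinearMap.comp_assoc, hv, hu]
    abel

end Helpers

/-- For any collection `C` of 2-term complexes, `W(C)` is a wide
subcategory of `mod Λ`: it is closed under kernels, cokernels and extensions. -/
theorem stmt18 {k : Type*} [Field k] [Algebra k Λ] [FiniteDimensional k Λ]
    (C : Set (TT Λ)) :
    -- closed under kernels
    (∀ N ∈ W Λ C, ∀ N' ∈ W Λ C, ∀ φ : N →ₗ[Λ] N',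
      ModuleCat.of Λ (LinearMap.ker φ) ∈ W Λ C) ∧
    -- closed under cokernels
    (∀ N ∈ W Λ C, ∀ N' ∈ W Λ C, ∀ φ : N →ₗ[Λ] N',
      ModuleCat.of Λ (N' ⧸ LinearMap.range φ) ∈ W Λ C) ∧
    -- closed under extensions
    (∀ A E B : ModuleCat.{u} Λ, ∀ (i : A →ₗ[Λ] E) (p : E →ₗ[Λ] B),
      Function.Injective i → Function.Exact i p → Function.Surjective p →
      A ∈ W Λ C → B ∈ W Λ C → E ∈ W Λ C) := by
  refine ⟨?_, ?_, ?_⟩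
  · intro N hN N' hN' φ X hX
    exact ss_ker X φ (hN X hX) (hN' X hX)
  · intro N hN N' hN' φ X hX
    exact ss_coker X φ (hN X hX) (hN' X hX)
  · intro A E B i p hi hex hp hA hB X hX
    exact ss_ext X i p hi hex hp (hA X hX) (hB X hX)

end Stmt18
end
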